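/- Suppose two Mallows models share the same parameter $\phi = \phi_1 = \phi_2$ and have representative vectors $x, y$. Let $e_i, e_j$ be two elements with $x_i, y_i, x_j, y_j \geq \sqrt{\epsilon}$, and suppose the position-shift values $\ell_1 = pos_{\pi_1}(e_i) - pos_{\pi_2}(e_i)$ and $\ell_2 = pos_{\pi_1}(e_j) - pos_{\pi_2}(e_j)$ are distinct with $\max\{|\ell_1|,|\ell_2|\} \leq \log(\epsilon)/\log(\phi)$. Then the $2\times 2$ matrix $M = \begin{pmatrix} x_i & y_i \\ x_j & y_j\end{pmatrix}$ has second singular value $\sigma_2(M) \geq \epsilon^2(1-\phi)/4$. -/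

import Mathlib

lemma aux_zpow_ge (φ ε : ℝ) (h0 : 0 < φ) (h1 : φ < 1) (hε : 0 < ε)
    (m : ℤ) (hm : (m : ℝ) ≤ Real.log ε / Real.log φ) : ε ≤ φ ^ m := by
  have hlog : Real.log φ < 0 := Real.log_neg h0 h1
  have h1' : φ ^ ((m : ℝ) : ℝ) = φ ^ m := Real.rpow_intCast φ m
  calc ε = φ ^ (Real.log ε / Real.log φ) := by
        rw [Real.rpow_def_of_pos h0]
        rw [show Real.log φ * (Real.log ε / Real.log φ) = Real.log ε by
          exact mul_div_cancel₀ _ (ne_of_lt hlog)]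
        rw [Real.exp_log hε]
    _ ≤ φ ^ ((m : ℝ)) := Real.rpow_le_rpow_of_exponent_ge h0 h1.le hm
    _ = φ ^ m := Real.rpow_intCast φ m

lemma aux_diff (φ ε : ℝ) (h0 : 0 < φ) (h1 : φ < 1) (hε : 0 ≤ ε)
    (m k : ℤ) (hmk : m < k) (hm : ε ≤ φ ^ m) :
    ε * (1 - φ) ≤ φ ^ m - φ ^ k := by
  have hφne : φ ≠ 0 := ne_of_gt h0
  have h2 : φ ^ k = φ ^ m * φ ^ (k - m) := by
    rw [← zpow_add₀ hφne]; ring_nf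
  have h4 : (1:ℤ) ≤ k - m := by omega
  have h3 : φ ^ (k - m) ≤ φ := by
    have he : k - m = ((k - m).toNat : ℤ) := by omega
    rw [he, zpow_natCast]
    have h5 : 1 ≤ (k - m).toNat := by omega
    calc φ ^ (k - m).toNat ≤ φ ^ 1 := pow_le_pow_of_le_one h0.le h1.le h5
      _ = φ := pow_one φ
  have hpm : 0 < φ ^ m := zpow_pos h0 m
  nlinarith [h3, hm, hpm]

lemma aux_absdiff (φ ε : ℝ) (h0 : 0 < φ) (h1 : φ < 1) (hε : 0 ≤ ε)
    (m k : ℤ) (hmk : m ≠ k) (hm : ε ≤ φ ^ m) (hk : ε ≤ φ ^ k) :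
    ε * (1 - φ) ≤ |φ ^ m - φ ^ k| := by
  rcases lt_or_gt_of_ne hmk with h | h
  · calc ε * (1 - φ) ≤ φ ^ m - φ ^ k := aux_diff φ ε h0 h1 hε m k h hm
      _ ≤ |φ ^ m - φ ^ k| := le_abs_self _
  · calc ε * (1 - φ) ≤ φ ^ k - φ ^ m := aux_diff φ ε h0 h1 hε k m h hk
      _ ≤ |φ ^ m - φ ^ k| := by rw [abs_sub_comm]; exact le_abs_self _

lemma aux_cs (a b c d : ℝ) : (a * d - b * c) ^ 2 ≤ (a ^ 2 + b ^ 2) * (c ^ 2 + d ^ 2) := by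
  nlinarith [sq_nonneg (a * c + b * d)]

lemma aux_cs2 (a b c d : ℝ) : (a * c + b * d) ^ 2 ≤ (a ^ 2 + b ^ 2) * (c ^ 2 + d ^ 2) := by
  nlinarith [sq_nonneg (a * d - b * c)]

lemma aux_sq2 (a b : ℝ) (h1 : 0 ≤ a) (h2 : a ≤ 1) (h3 : 0 ≤ b) (h4 : b ≤ 1) :
    a ^ 2 + b ^ 2 ≤ 2 := by nlinarith

set_option maxHeartbeats 1000000 in
/-- Lower bound on the second singular value of the `2×2` submatrix of representative
vectors of two Mallows models sharing the same parameter `φ`: if elements `e_i, e_j` have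
all four representative entries at least `√ε` and distinct position-shifts
`ℓ₁ = pos_{π₁}(e_i) - pos_{π₂}(e_i)` and `ℓ₂ = pos_{π₁}(e_j) - pos_{π₂}(e_j)` with
`max(|ℓ₁|,|ℓ₂|) ≤ log ε / log φ`, then `σ₂(M) ≥ ε²(1-φ)/4` for `M = [[xᵢ,yᵢ],[xⱼ,yⱼ]]`
(expressed as `‖M w‖ ≥ ε²(1-φ)/4` for every unit vector `w`). -/
theorem degenerate_submatrix_sigma2 (n : ℕ) (φ ε : ℝ)
    (h0 : 0 < φ) (h1 : φ < 1) (hε : 0 < ε)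
    (π₁ π₂ : Equiv.Perm (Fin n)) (x y : Fin n → ℝ)
    (hx : ∀ e, x e = φ ^ ((π₁.symm e : ℕ)) / ∑ k ∈ Finset.range n, φ ^ k)
    (hy : ∀ e, y e = φ ^ ((π₂.symm e : ℕ)) / ∑ k ∈ Finset.range n, φ ^ k)
    (i j : Fin n)
    (hxi : Real.sqrt ε ≤ x i) (hyi : Real.sqrt ε ≤ y i)
    (hxj : Real.sqrt ε ≤ x j) (hyj : Real.sqrt ε ≤ y j)
    (hne : ((π₁.symm i : ℕ) : ℤ) - ((π₂.symm i : ℕ) : ℤ)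
        ≠ ((π₁.symm j : ℕ) : ℤ) - ((π₂.symm j : ℕ) : ℤ))
    (hbound : ((max |((π₁.symm i : ℕ) : ℤ) - ((π₂.symm i : ℕ) : ℤ)|
          |((π₁.symm j : ℕ) : ℤ) - ((π₂.symm j : ℕ) : ℤ)| : ℤ) : ℝ)
        ≤ Real.log ε / Real.log φ) :
    ∀ w : Fin 2 → ℝ, w 0 ^ 2 + w 1 ^ 2 = 1 →
      ε ^ 2 * (1 - φ) / 4 ≤
        Real.sqrt (((!![x i, y i; x j, y j] : Matrix (Fin 2) (Fin 2) ℝ).mulVec w 0) ^ 2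
          + ((!![x i, y i; x j, y j] : Matrix (Fin 2) (Fin 2) ℝ).mulVec w 1) ^ 2) := by
  intro w hw
  have hφne : φ ≠ 0 := ne_of_gt h0
  set Z := ∑ k ∈ Finset.range n, φ ^ k with hZ
  set A := (π₁.symm i : ℕ)
  set B := (π₂.symm i : ℕ)
  set C := (π₁.symm j : ℕ)
  set D := (π₂.symm j : ℕ)
  have hn : 0 < n := i.pos
  have hZ1 : 1 ≤ Z := by
    have := Finset.single_le_sum (f := fun k => φ ^ k)
      (fun k _ => le_of_lt (pow_pos h0 k)) (Finset.mem_range.mpr hn)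
    simpa using this
  have hZ0 : 0 < Z := lt_of_lt_of_le one_pos hZ1
  -- entries in [0,1]
  have hle1 : ∀ e, x e ≤ 1 ∧ y e ≤ 1 ∧ 0 ≤ x e ∧ 0 ≤ y e := by
    intro e
    rw [hx, hy]
    have p1 : φ ^ ((π₁.symm e : ℕ)) ≤ 1 := pow_le_one₀ h0.le h1.le
    have p2 : φ ^ ((π₂.symm e : ℕ)) ≤ 1 := pow_le_one₀ h0.le h1.le
    refine ⟨?_, ?_, ?_, ?_⟩
    · rw [div_le_one hZ0]; linarith
    · rw [div_le_one hZ0]; linarith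
    · exact div_nonneg (pow_nonneg h0.le _) hZ0.le
    · exact div_nonneg (pow_nonneg h0.le _) hZ0.le
  -- exponents
  set m : ℤ := (D : ℤ) - (C : ℤ) with hm
  set k : ℤ := (B : ℤ) - (A : ℤ) with hk
  have hkey : ∀ (P Q : ℕ), (φ ^ P / Z) * φ ^ ((Q:ℤ) - (P:ℤ)) = φ ^ Q / Z := by
    intro P Q
    rw [div_mul_eq_mul_div, ← zpow_natCast φ P, ← zpow_natCast φ Q, ← zpow_add₀ hφne]
    ring_nf
  have hyirw : y i = x i * φ ^ k := by
    rw [hx, hy, hk]; exact (hkey A B).symm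
  have hyjrw : y j = x j * φ ^ m := by
    rw [hx, hy, hm]; exact (hkey C D).symm
  set det := x i * y j - y i * x j with hdet
  have hdet2 : det = x i * x j * (φ ^ m - φ ^ k) := by
    rw [hdet, hyirw, hyjrw]; ring
  have habsm : (m : ℝ) ≤ Real.log ε / Real.log φ := by
    refine le_trans ?_ hbound
    have : m ≤ max |(A:ℤ) - (B:ℤ)| |(C:ℤ) - (D:ℤ)| := by
      calc m ≤ |m| := le_abs_self m
        _ = |(C:ℤ) - (D:ℤ)| := by rw [hm, abs_sub_comm]
        _ ≤ _ := le_max_right _ _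
    exact_mod_cast this
  have habsk : (k : ℝ) ≤ Real.log ε / Real.log φ := by
    refine le_trans ?_ hbound
    have : k ≤ max |(A:ℤ) - (B:ℤ)| |(C:ℤ) - (D:ℤ)| := by
      calc k ≤ |k| := le_abs_self k
        _ = |(A:ℤ) - (B:ℤ)| := by rw [hk, abs_sub_comm]
        _ ≤ _ := le_max_left _ _
    exact_mod_cast this
  have hεm : ε ≤ φ ^ m := aux_zpow_ge φ ε h0 h1 hε m habsm
  have hεk : ε ≤ φ ^ k := aux_zpow_ge φ ε h0 h1 hε k habsk
  have hmk : m ≠ k := by rw [hm, hk]; omega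
  have hdiff : ε * (1 - φ) ≤ |φ ^ m - φ ^ k| :=
    aux_absdiff φ ε h0 h1 hε.le m k hmk hεm hεk
  -- x i * x j ≥ ε
  have hxx : ε ≤ x i * x j := by
    have h1 : Real.sqrt ε * Real.sqrt ε ≤ x i * x j :=
      mul_le_mul hxi hxj (Real.sqrt_nonneg ε) (hle1 i).2.2.1
    rwa [Real.mul_self_sqrt hε.le] at h1
  -- |det| ≥ ε² (1-φ)
  have hdetlb : ε ^ 2 * (1 - φ) ≤ |det| := by
    rw [hdet2, abs_mul, abs_of_nonneg (mul_nonneg (hle1 i).2.2.1 (hle1 j).2.2.1)]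
    calc ε ^ 2 * (1 - φ) = ε * (ε * (1 - φ)) := by ring
      _ ≤ (x i * x j) * |φ ^ m - φ ^ k| := by
          exact mul_le_mul hxx hdiff (mul_nonneg hε.le (by linarith))
            (mul_nonneg (hle1 i).2.2.1 (hle1 j).2.2.1)
  -- norm bound via det
  set u0 := (!![x i, y i; x j, y j] : Matrix (Fin 2) (Fin 2) ℝ).mulVec w 0 with hu0
  set u1 := (!![x i, y i; x j, y j] : Matrix (Fin 2) (Fin 2) ℝ).mulVec w 1 with hu1
  have hu0' : u0 = x i * w 0 + y i * w 1 := by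
    simp [hu0, Matrix.mulVec, dotProduct, Fin.sum_univ_two]
  have hu1' : u1 = x j * w 0 + y j * w 1 := by
    simp [hu1, Matrix.mulVec, dotProduct, Fin.sum_univ_two]
  clear_value u0 u1
  set v0 := x i * (-w 1) + y i * w 0 with hv0
  set v1 := x j * (-w 1) + y j * w 0 with hv1
  clear_value v0 v1
  have hident : u0 * v1 - u1 * v0 = det := by
    rw [hu0', hu1', hv0, hv1, hdet]; linear_combination (x i * y j - y i * x j) * hw
  have hcs : (u0 * v1 - u1 * v0) ^ 2 ≤ (u0 ^ 2 + u1 ^ 2) * (v0 ^ 2 + v1 ^ 2) :=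
    aux_cs u0 u1 v0 v1
  have hvbd : v0 ^ 2 + v1 ^ 2 ≤ 4 := by
    obtain ⟨hxi1, hyi1, hxi0, hyi0⟩ := hle1 i
    obtain ⟨hxj1, hyj1, hxj0, hyj0⟩ := hle1 j
    have c1 : v0 ^ 2 ≤ (x i ^ 2 + y i ^ 2) * (w 1 ^ 2 + w 0 ^ 2) := by
      rw [hv0]
      have := aux_cs2 (x i) (y i) (-w 1) (w 0)
      calc (x i * (-w 1) + y i * w 0) ^ 2
          ≤ (x i ^ 2 + y i ^ 2) * ((-w 1) ^ 2 + w 0 ^ 2) := this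
        _ = (x i ^ 2 + y i ^ 2) * (w 1 ^ 2 + w 0 ^ 2) := by ring
    have c2 : v1 ^ 2 ≤ (x j ^ 2 + y j ^ 2) * (w 1 ^ 2 + w 0 ^ 2) := by
      rw [hv1]
      have := aux_cs2 (x j) (y j) (-w 1) (w 0)
      calc (x j * (-w 1) + y j * w 0) ^ 2
          ≤ (x j ^ 2 + y j ^ 2) * ((-w 1) ^ 2 + w 0 ^ 2) := this
        _ = (x j ^ 2 + y j ^ 2) * (w 1 ^ 2 + w 0 ^ 2) := by ring
    have d1 : x i ^ 2 + y i ^ 2 ≤ 2 := aux_sq2 _ _ hxi0 hxi1 hyi0 hyi1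
    have d2 : x j ^ 2 + y j ^ 2 ≤ 2 := aux_sq2 _ _ hxj0 hxj1 hyj0 hyj1
    have hw' : w 1 ^ 2 + w 0 ^ 2 = 1 := by linarith
    rw [hw'] at c1 c2
    linarith
  have hS0 : 0 ≤ u0 ^ 2 + u1 ^ 2 := by positivity
  have hdet4 : det ^ 2 ≤ 4 * (u0 ^ 2 + u1 ^ 2) := by
    calc det ^ 2 = (u0 * v1 - u1 * v0) ^ 2 := by rw [hident]
      _ ≤ (u0 ^ 2 + u1 ^ 2) * (v0 ^ 2 + v1 ^ 2) := hcs
      _ ≤ (u0 ^ 2 + u1 ^ 2) * 4 := mul_le_mul_of_nonneg_left hvbd hS0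
      _ = 4 * (u0 ^ 2 + u1 ^ 2) := by ring
  have hfin : |det| / 2 ≤ Real.sqrt (u0 ^ 2 + u1 ^ 2) := by
    have h4 : Real.sqrt (4 * (u0 ^ 2 + u1 ^ 2)) = 2 * Real.sqrt (u0 ^ 2 + u1 ^ 2) := by
      rw [show (4:ℝ) = 2 ^ 2 by norm_num, Real.sqrt_mul (by positivity),
        Real.sqrt_sq (by norm_num : (0:ℝ) ≤ 2)]
    have hle : |det| ≤ 2 * Real.sqrt (u0 ^ 2 + u1 ^ 2) := by
      calc |det| = Real.sqrt (det ^ 2) := (Real.sqrt_sq_eq_abs det).symm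
        _ ≤ Real.sqrt (4 * (u0 ^ 2 + u1 ^ 2)) := Real.sqrt_le_sqrt hdet4
        _ = 2 * Real.sqrt (u0 ^ 2 + u1 ^ 2) := h4
    linarith
  calc ε ^ 2 * (1 - φ) / 4 ≤ |det| / 2 := by
        have hnn : 0 ≤ ε ^ 2 * (1 - φ) := mul_nonneg (sq_nonneg ε) (by linarith)
        linarith
    _ ≤ Real.sqrt (u0 ^ 2 + u1 ^ 2) := hfin
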